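/- arXiv:2104.12834 — 2 statements merged into one kernel-verified Lean document; each statement's English description precedes it below -/
import Mathlib

section
/- Let A, B, s, α, β be positive real parameters with α ≤ 1, and for z, t > 0 define f_z(t) = t − A z^s t^{1−α} − B z t^{1+β}. Set z_* = (α/B)^{α/(α+sβ)} (β/A)^{β/(α+sβ)} (α+β)^{−(α+β)/(α+sβ)} and t_* = (α/B)^{s/(α+sβ)} (A/β)^{1/(α+sβ)} (α+β)^{(1−s)/(α+sβ)}. Then for every z with 0 < z < z_* one has f_z(t_*) > 0. -/
open MeasureTheory Filter
open scoped RealInnerProductSpace ENNReal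

noncomputable section

/-- Euclidean space `ℝ^N`. -/
abbrev RN (N : ℕ) := EuclideanSpace ℝ (Fin N)

/-- The gradient of a function `u : ℝ^N → ℝ`. -/
def grad {N : ℕ} (u : RN N → ℝ) (x : RN N) : RN N := gradient u x

/-- Membership in the Sobolev space `H¹(ℝ^N)`: `u ∈ L²` and `∇u ∈ L²`. -/
def InH1 {N : ℕ} (u : RN N → ℝ) : Prop :=
  MemLp u 2 (volume : Measure (RN N)) ∧ MemLp (grad u) 2 (volume : Measure (RN N))

/-- The `H¹` norm. -/
def H1norm {N : ℕ} (u : RN N → ℝ) : ℝ :=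
  Real.sqrt ((∫ x, (u x) ^ 2) + ∫ x, ‖grad u x‖ ^ 2)

/-- The `H¹` distance. -/
def H1dist {N : ℕ} (u v : RN N → ℝ) : ℝ :=
  Real.sqrt ((∫ x, (u x - v x) ^ 2) + ∫ x, ‖grad u x - grad v x‖ ^ 2)

/-- The `L²`-norm of the gradient, `‖∇u‖₂`. -/
def gradL2 {N : ℕ} (u : RN N → ℝ) : ℝ := (∫ x, ‖grad u x‖ ^ 2) ^ ((1:ℝ)/2)

/-- The `L²`-norm `‖u‖₂`. -/
def L2 {N : ℕ} (u : RN N → ℝ) : ℝ := (∫ x, (u x) ^ 2) ^ ((1:ℝ)/2)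

/-- The `L^q`-norm `‖u‖_q` (for finite `q`). -/
def Lq {N : ℕ} (q : ℝ) (u : RN N → ℝ) : ℝ := (∫ x, |u x| ^ q) ^ (1/q)

/-- The energy functional
`F(u) = ½∫(|∇u|² − V u²) − (1/p)∫|u|^p`. -/
def Fen {N : ℕ} (V : RN N → ℝ) (p : ℝ) (u : RN N → ℝ) : ℝ :=
  (1/2) * (∫ x, (‖grad u x‖ ^ 2 - V x * (u x) ^ 2)) - (1/p) * ∫ x, |u x| ^ p

/-- The limit energy functional `F_∞(u) = ½∫|∇u|² − (1/p)∫|u|^p`. -/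
def FInf {N : ℕ} (p : ℝ) (u : RN N → ℝ) : ℝ :=
  (1/2) * (∫ x, ‖grad u x‖ ^ 2) - (1/p) * ∫ x, |u x| ^ p

/-- `u` is a weak solution of `−Δu − V u + λ u = |u|^{p−2} u` on `ℝ^N`. -/
def WeakSol {N : ℕ} (V : RN N → ℝ) (lam p : ℝ) (u : RN N → ℝ) : Prop :=
  ∀ φ : RN N → ℝ, ContDiff ℝ (⊤ : ℕ∞) φ → HasCompactSupport φ →
    (∫ x, ⟪grad u x, grad φ x⟫) + (∫ x, (lam - V x) * u x * φ x)
      = ∫ x, |u x| ^ (p - 2) * u x * φ x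

/-- The derivative of `F` at `u` in direction `φ`. -/
def dFen {N : ℕ} (V : RN N → ℝ) (p : ℝ) (u φ : RN N → ℝ) : ℝ :=
  (∫ x, ⟪grad u x, grad φ x⟫) - (∫ x, V x * u x * φ x)
    - ∫ x, |u x| ^ (p - 2) * u x * φ x

/-- The action functional `I_λ`. -/
def Ilam {N : ℕ} (V : RN N → ℝ) (lam p : ℝ) (u : RN N → ℝ) : ℝ :=
  (1/2) * (∫ x, ‖grad u x‖ ^ 2) + (lam/2) * (∫ x, (u x) ^ 2)
    - (1/2) * (∫ x, V x * (u x) ^ 2) - (1/p) * ∫ x, |u x| ^ p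

/-- The limit action functional `I_{∞,λ}`. -/
def IlamInf {N : ℕ} (lam p : ℝ) (u : RN N → ℝ) : ℝ :=
  (1/2) * (∫ x, ‖grad u x‖ ^ 2) + (lam/2) * (∫ x, (u x) ^ 2) - (1/p) * ∫ x, |u x| ^ p

/-- The derivative of `I_λ` at `u` in direction `φ`. -/
def dIlam {N : ℕ} (V : RN N → ℝ) (lam p : ℝ) (u φ : RN N → ℝ) : ℝ :=
  (∫ x, ⟪grad u x, grad φ x⟫) + lam * (∫ x, u x * φ x)
    - (∫ x, V x * u x * φ x) - ∫ x, |u x| ^ (p - 2) * u x * φ x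

/-- The best Sobolev constant
`S = inf {‖∇u‖₂² / ‖u‖_{2*}² : u ∈ D^{1,2}(ℝ^N) \ {0}}`, `2* = 2N/(N−2)`. -/
def sobolevS (N : ℕ) : ℝ :=
  sInf {c : ℝ | ∃ u : RN N → ℝ,
    MemLp u (ENNReal.ofReal (2 * N / ((N : ℝ) - 2))) volume ∧
    MemLp (grad u) 2 volume ∧ ¬ (u =ᵐ[volume] 0) ∧
    c = (∫ x, ‖grad u x‖ ^ 2) /
      ((∫ x, |u x| ^ ((2 * N : ℝ) / ((N : ℝ) - 2))) ^ (((N : ℝ) - 2) / N))}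

/-- The optimal Gagliardo–Nirenberg constant `G_q` for the inequality
`‖u‖_q ≤ G_q ‖u‖₂^{1 − N(q−2)/(2q)} ‖∇u‖₂^{N(q−2)/(2q)}` on `H¹(ℝ^N)`. -/
def GN (N : ℕ) (q : ℝ) : ℝ :=
  sInf {C : ℝ | 0 ≤ C ∧ ∀ u : RN N → ℝ, InH1 u →
    Lq q u ≤ C * (L2 u) ^ (1 - N * (q - 2) / (2 * q))
      * (gradL2 u) ^ (N * (q - 2) / (2 * q))}

/-- The scaling parameter `μ_ρ = (ρ/ρ₀)^{2(p−2)/(N(p−2)−4)}`. -/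
def mupar (N : ℕ) (p ρ₀ ρ : ℝ) : ℝ := (ρ / ρ₀) ^ (2 * (p - 2) / ((N : ℝ) * (p - 2) - 4))

/-- The rescaled ground state `Z_ρ(x) = μ_ρ^{−2/(p−2)} U(x/μ_ρ)`. -/
def Zfun {N : ℕ} (p ρ₀ : ℝ) (U : RN N → ℝ) (ρ : ℝ) (x : RN N) : ℝ :=
  (mupar N p ρ₀ ρ) ^ (-(2 / (p - 2))) * U ((mupar N p ρ₀ ρ)⁻¹ • x)

/-- The ground state level `m_ρ = F_∞(Z_ρ)`. -/
def mlevel {N : ℕ} (p ρ₀ : ℝ) (U : RN N → ℝ) (ρ : ℝ) : ℝ := FInf p (Zfun p ρ₀ U ρ)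

/-- `λ_ρ = (ρ₀/ρ)^{4(p−2)/(N(p−2)−4)}`. -/
def lamr (N : ℕ) (p ρ₀ ρ : ℝ) : ℝ := (ρ₀ / ρ) ^ (4 * (p - 2) / ((N : ℝ) * (p - 2) - 4))

/-- The mass-preserving rescaling `u_h(x) = h^{N/2} u(hx)`. -/
def scaleFun {N : ℕ} (h : ℝ) (u : RN N → ℝ) (x : RN N) : ℝ := h ^ ((N : ℝ) / 2) * u (h • x)

/-- A continuous path in `S_ρ ⊂ H¹(ℝ^N)` defined on `[0,1]`
(continuity with respect to the `H¹` distance). -/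
def IsH1Path {N : ℕ} (ρ : ℝ) (ξ : ℝ → RN N → ℝ) : Prop :=
  (∀ t ∈ Set.Icc (0:ℝ) 1, InH1 (ξ t) ∧ (∫ x, (ξ t x) ^ 2) = ρ ^ 2) ∧
  ∀ t₀ ∈ Set.Icc (0:ℝ) 1, ∀ ε > 0, ∃ δ > 0, ∀ t ∈ Set.Icc (0:ℝ) 1,
    |t - t₀| < δ → H1dist (ξ t) (ξ t₀) < ε

/-- The mountain pass level `m_{V,ρ}` of `F` on `S_ρ` over paths joining `u₀` to `u₁`. -/
def MPlevel {N : ℕ} (V : RN N → ℝ) (p ρ : ℝ) (u₀ u₁ : RN N → ℝ) : ℝ :=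
  sInf {c : ℝ | ∃ ξ : ℝ → RN N → ℝ, IsH1Path ρ ξ ∧ ξ 0 = u₀ ∧ ξ 1 = u₁ ∧
    c = sSup ((fun t => Fen V p (ξ t)) '' Set.Icc (0:ℝ) 1)}

/-- Lemma 4.2, elementary lemma. For positive `A, B, s, α, β` with `α ≤ 1`,
setting `f_z(t) = t − A z^s t^{1−α} − B z t^{1+β}`,
`z_* = (α/B)^{α/(α+sβ)} (β/A)^{β/(α+sβ)} (α+β)^{−(α+β)/(α+sβ)}` and
`t_* = (α/B)^{s/(α+sβ)} (A/β)^{1/(α+sβ)} (α+β)^{(1−s)/(α+sβ)}`, one has `f_z(t_*) > 0`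
whenever `0 < z < z_*`. -/
theorem statement17
    (A B s α β : ℝ) (hA : 0 < A) (hB : 0 < B) (hs : 0 < s) (hα : 0 < α) (hβ : 0 < β)
    (hα1 : α ≤ 1) :
    ∀ z : ℝ, 0 < z →
      z < (α / B) ^ (α / (α + s * β)) * (β / A) ^ (β / (α + s * β))
          * (α + β) ^ (-((α + β) / (α + s * β))) →
      0 < (α / B) ^ (s / (α + s * β)) * (A / β) ^ (1 / (α + s * β))
            * (α + β) ^ ((1 - s) / (α + s * β))
          - A * z ^ s * ((α / B) ^ (s / (α + s * β)) * (A / β) ^ (1 / (α + s * β))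
            * (α + β) ^ ((1 - s) / (α + s * β))) ^ (1 - α)
          - B * z * ((α / B) ^ (s / (α + s * β)) * (A / β) ^ (1 / (α + s * β))
            * (α + β) ^ ((1 - s) / (α + s * β))) ^ (1 + β)  := by
  intro z hz hzlt
  have hE : 0 < α + s * β := by positivity
  have ha : (0:ℝ) < α / B := by positivity
  have hb : (0:ℝ) < β / A := by positivity
  have hb' : (0:ℝ) < A / β := by positivity
  have hc : (0:ℝ) < α + β := by positivity
  set E := α + s * β with hEdef
  set t := (α / B) ^ (s / E) * (A / β) ^ (1 / E) * (α + β) ^ ((1 - s) / E) with ht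
  set zs := (α / B) ^ (α / E) * (β / A) ^ (β / E) * (α + β) ^ (-((α + β) / E)) with hzs
  have htpos : 0 < t := by rw [ht]; positivity
  have hzspos : 0 < zs := by rw [hzs]; positivity
  have lt' : Real.log t = (s / E) * (Real.log α - Real.log B)
      + (1 / E) * (Real.log A - Real.log β) + ((1 - s) / E) * Real.log (α + β) := by
    rw [ht, Real.log_mul (by positivity) (by positivity),
        Real.log_mul (by positivity) (by positivity),
        Real.log_rpow ha, Real.log_rpow hb', Real.log_rpow hc,
        Real.log_div hα.ne' hB.ne', Real.log_div hA.ne' hβ.ne']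
  have lzs : Real.log zs = (α / E) * (Real.log α - Real.log B)
      + (β / E) * (Real.log β - Real.log A) - ((α + β) / E) * Real.log (α + β) := by
    rw [hzs, Real.log_mul (by positivity) (by positivity),
        Real.log_mul (by positivity) (by positivity),
        Real.log_rpow ha, Real.log_rpow hb, Real.log_rpow hc,
        Real.log_div hα.ne' hB.ne', Real.log_div hβ.ne' hA.ne']
    ring
  have e1 : A * zs ^ s * t ^ (1 - α) = β / (α + β) * t := by
    have hL : (0:ℝ) < A * zs ^ s * t ^ (1 - α) := by positivity
    have hR : (0:ℝ) < β / (α + β) * t := by positivity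
    rw [← Real.exp_log hL, ← Real.exp_log hR]
    congr 1
    rw [Real.log_mul (by positivity) (by positivity),
        Real.log_mul (by positivity) (by positivity),
        Real.log_mul (by positivity) htpos.ne',
        Real.log_rpow hzspos, Real.log_rpow htpos,
        Real.log_div hβ.ne' hc.ne', lzs, lt']
    field_simp
    ring
  have e2 : B * zs * t ^ (1 + β) = α / (α + β) * t := by
    have hL : (0:ℝ) < B * zs * t ^ (1 + β) := by positivity
    have hR : (0:ℝ) < α / (α + β) * t := by positivity
    rw [← Real.exp_log hL, ← Real.exp_log hR]
    congr 1
    rw [Real.log_mul (by positivity) (by positivity),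
        Real.log_mul (by positivity) hzspos.ne',
        Real.log_mul (by positivity) htpos.ne',
        Real.log_rpow htpos,
        Real.log_div hα.ne' hc.ne', lzs, lt']
    field_simp
    ring
  have key : t = A * zs ^ s * t ^ (1 - α) + B * zs * t ^ (1 + β) := by
    rw [e1, e2]; field_simp; ring
  have h1 : A * z ^ s * t ^ (1 - α) < A * zs ^ s * t ^ (1 - α) := by
    have hzz : z ^ s < zs ^ s := Real.rpow_lt_rpow hz.le hzlt hs
    have h0 : (0:ℝ) < t ^ (1 - α) := by positivity
    exact mul_lt_mul_of_pos_right (mul_lt_mul_of_pos_left hzz hA) h0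
  have h2 : B * z * t ^ (1 + β) < B * zs * t ^ (1 + β) := by
    have h0 : (0:ℝ) < t ^ (1 + β) := by positivity
    exact mul_lt_mul_of_pos_right (mul_lt_mul_of_pos_left hzlt hB) h0
  linarith
end
end

section
/- Let N ≥ 1, p ∈ (2 + 4/N, 2*), V ≥ 0 measurable, and let R_* > 0 and ρ_* > 0 be such that for every α ∈ (0, ρ_*), inf{F(u) : u ∈ S_α, ‖∇u‖₂ = R_*} > 0. For α ∈ (0, ρ_*) define c_{V,α} := inf{F(u) : u ∈ S_α, ‖∇u‖₂ ≤ R_*}. If ρ ∈ (0, ρ_*) and c_{V,ρ} < 0, then for every α with 0 < α ≤ ρ one has c_{V,α} ≥ c_{V,ρ}. -/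
open MeasureTheory Filter
open scoped RealInnerProductSpace ENNReal

noncomputable section

lemma grad_const_mul {N : ℕ} (c : ℝ) (hc : c ≠ 0) (u : RN N → ℝ) (x : RN N) :
    grad (fun y => c * u y) x = c • grad u x := by
  by_cases hd : DifferentiableAt ℝ u x
  · unfold grad gradient
    rw [fderiv_const_mul hd c, _root_.map_smul _ _ _]
  · have hd2 : ¬ DifferentiableAt ℝ (fun y => c * u y) x := by
      intro h
      have h2 := h.const_mul c⁻¹
      have heq : (fun y => c⁻¹ * (c * u y)) = u := by
        funext y; rw [← mul_assoc, inv_mul_cancel₀ hc, one_mul]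
      rw [heq] at h2
      exact hd h2
    unfold grad
    rw [gradient_eq_zero_of_not_differentiableAt hd,
      gradient_eq_zero_of_not_differentiableAt hd2, smul_zero]

lemma mass_const_mul {N : ℕ} (c : ℝ) (u : RN N → ℝ) :
    (∫ x, (c * u x) ^ 2) = c ^ 2 * ∫ x, (u x) ^ 2 := by
  simp_rw [mul_pow]
  exact integral_const_mul _ _

lemma gradsq_const_mul {N : ℕ} (c : ℝ) (hc : c ≠ 0) (u : RN N → ℝ) :
    (∫ x, ‖grad (fun y => c * u y) x‖ ^ 2) = c ^ 2 * ∫ x, ‖grad u x‖ ^ 2 := by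
  have h : ∀ x : RN N, ‖grad (fun y => c * u y) x‖ ^ 2 = c ^ 2 * ‖grad u x‖ ^ 2 := by
    intro x
    rw [grad_const_mul c hc u x, norm_smul, Real.norm_eq_abs, mul_pow, sq_abs]
  simp_rw [h]
  exact integral_const_mul _ _

lemma gradL2_const_mul {N : ℕ} (c : ℝ) (hc : 0 < c) (u : RN N → ℝ) :
    gradL2 (fun y => c * u y) = c * gradL2 u := by
  unfold gradL2
  rw [gradsq_const_mul c (ne_of_gt hc)]
  have hG : 0 ≤ ∫ x, ‖grad u x‖ ^ 2 := integral_nonneg fun x => sq_nonneg _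
  rw [Real.mul_rpow (sq_nonneg c) hG]
  congr 1
  rw [← Real.rpow_natCast c 2, ← Real.rpow_mul hc.le]
  norm_num

lemma InH1_const_mul {N : ℕ} (c : ℝ) (hc : c ≠ 0) (u : RN N → ℝ) (hu : InH1 u) :
    InH1 (fun y => c * u y) := by
  refine ⟨hu.1.const_mul c, ?_⟩
  have heq : grad (fun y => c * u y) = fun x => c • grad u x :=
    funext (grad_const_mul c hc u)
  rw [heq]
  exact hu.2.const_smul c

lemma Fen_const_mul_le {N : ℕ} (V : RN N → ℝ) (p : ℝ) (hp2 : 2 ≤ p) (u : RN N → ℝ)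
    (c : ℝ) (hc : 1 ≤ c) :
    Fen V p (fun y => c * u y) ≤ c ^ 2 * Fen V p u := by
  have hc0 : (0:ℝ) < c := lt_of_lt_of_le one_pos hc
  have hp0 : (0:ℝ) < p := lt_of_lt_of_le (by norm_num) hp2
  have hP : 0 ≤ ∫ x, |u x| ^ p := integral_nonneg fun x => Real.rpow_nonneg (abs_nonneg _) p
  have h1 : (∫ x, (‖grad (fun y => c * u y) x‖ ^ 2 - V x * (c * u x) ^ 2))
      = c ^ 2 * ∫ x, (‖grad u x‖ ^ 2 - V x * (u x) ^ 2) := by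
    have h : ∀ x : RN N, ‖grad (fun y => c * u y) x‖ ^ 2 - V x * (c * u x) ^ 2
        = c ^ 2 * (‖grad u x‖ ^ 2 - V x * (u x) ^ 2) := by
      intro x
      rw [grad_const_mul c (ne_of_gt hc0) u x, norm_smul, Real.norm_eq_abs, mul_pow, sq_abs]
      ring
    simp_rw [h]
    exact integral_const_mul _ _
  have h2 : (∫ x, |c * u x| ^ p) = c ^ p * ∫ x, |u x| ^ p := by
    have h : ∀ x : RN N, |c * u x| ^ p = c ^ p * |u x| ^ p := by
      intro x
      rw [abs_mul, abs_of_pos hc0, Real.mul_rpow hc0.le (abs_nonneg _)]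
    simp_rw [h]
    exact integral_const_mul _ _
  unfold Fen
  rw [h1, h2]
  have hcp : c ^ (2:ℝ) ≤ c ^ p := Real.rpow_le_rpow_of_exponent_le hc hp2
  have hc2 : c ^ (2:ℝ) = c ^ 2 := by
    rw [← Real.rpow_natCast c 2]; norm_num
  rw [hc2] at hcp
  have h3 : (1/p) * (c ^ 2 * (∫ x, |u x| ^ p)) ≤ (1/p) * (c ^ p * ∫ x, |u x| ^ p) := by
    apply mul_le_mul_of_nonneg_left _ (by positivity)
    exact mul_le_mul_of_nonneg_right hcp hP
  have h4 : c ^ 2 * ((1/2) * (∫ x, (‖grad u x‖ ^ 2 - V x * (u x) ^ 2)) - (1/p) * ∫ x, |u x| ^ p)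
      = (1/2) * (c ^ 2 * ∫ x, (‖grad u x‖ ^ 2 - V x * (u x) ^ 2))
        - (1/p) * (c ^ 2 * ∫ x, |u x| ^ p) := by ring
  linarith

/-- Lemma 4.4. Suppose that for every `0 < α < ρ_*` the infimum of `F` over
`{u ∈ S_α : ‖∇u‖₂ = R_*}` is positive, and define
`c_{V,α} = inf {F(u) : u ∈ S_α, ‖∇u‖₂ ≤ R_*}`. If `0 < ρ < ρ_*` and `c_{V,ρ} < 0`, then
`c_{V,α} ≥ c_{V,ρ}` for every `0 < α ≤ ρ`. -/
theorem statement18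
    (N : ℕ) (hN : 1 ≤ N) (p : ℝ)
    (hp1 : 2 + 4 / (N : ℝ) < p) (hp2 : 3 ≤ N → p < 2 * N / ((N : ℝ) - 2))
    (V : RN N → ℝ) (hVmeas : Measurable V) (hVpos : ∀ x, 0 ≤ V x)
    (Rstar ρstar : ℝ) (hRstar : 0 < Rstar) (hρstar : 0 < ρstar)
    (hgeom : ∀ α : ℝ, 0 < α → α < ρstar →
      0 < sInf {c : ℝ | ∃ u : RN N → ℝ, InH1 u ∧ (∫ x, (u x) ^ 2) = α ^ 2 ∧
        gradL2 u = Rstar ∧ c = Fen V p u})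
    (ρ : ℝ) (hρ : 0 < ρ) (hρρstar : ρ < ρstar)
    (hcneg : sInf {c : ℝ | ∃ u : RN N → ℝ, InH1 u ∧ (∫ x, (u x) ^ 2) = ρ ^ 2 ∧
      gradL2 u ≤ Rstar ∧ c = Fen V p u} < 0) :
    ∀ α : ℝ, 0 < α → α ≤ ρ →
      sInf {c : ℝ | ∃ u : RN N → ℝ, InH1 u ∧ (∫ x, (u x) ^ 2) = ρ ^ 2 ∧
          gradL2 u ≤ Rstar ∧ c = Fen V p u}
        ≤ sInf {c : ℝ | ∃ u : RN N → ℝ, InH1 u ∧ (∫ x, (u x) ^ 2) = α ^ 2 ∧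
          gradL2 u ≤ Rstar ∧ c = Fen V p u} := by

  intro α hα hαρ
  have hN1 : (1:ℝ) ≤ (N:ℝ) := by exact_mod_cast hN
  have hp2 : (2:ℝ) ≤ p := by
    have h4 : (0:ℝ) < 4 / (N:ℝ) := by positivity
    linarith
  -- the big ball set at level ρ is bounded below
  have hbddρ : BddBelow {c : ℝ | ∃ u : RN N → ℝ, InH1 u ∧ (∫ x, (u x) ^ 2) = ρ ^ 2 ∧
      gradL2 u ≤ Rstar ∧ c = Fen V p u} := by
    by_contra h
    rw [csInf_of_not_bddBelow h, Real.sInf_empty] at hcneg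
    exact lt_irrefl 0 hcneg
  -- positivity of F on the gradient sphere, for masses below ρstar
  have hsphere : ∀ β : ℝ, 0 < β → β < ρstar → ∀ w : RN N → ℝ, InH1 w →
      (∫ x, (w x) ^ 2) = β ^ 2 → gradL2 w = Rstar → 0 < Fen V p w := by
    intro β hβ0 hβ1 w hw1 hw2 hw3
    have hpos := hgeom β hβ0 hβ1
    have hbdd : BddBelow {c : ℝ | ∃ u : RN N → ℝ, InH1 u ∧ (∫ x, (u x) ^ 2) = β ^ 2 ∧
        gradL2 u = Rstar ∧ c = Fen V p u} := by
      by_contra h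
      rw [csInf_of_not_bddBelow h, Real.sInf_empty] at hpos
      exact lt_irrefl 0 hpos
    have hmem : Fen V p w ∈ {c : ℝ | ∃ u : RN N → ℝ, InH1 u ∧ (∫ x, (u x) ^ 2) = β ^ 2 ∧
        gradL2 u = Rstar ∧ c = Fen V p u} := ⟨w, hw1, hw2, hw3, rfl⟩
    exact lt_of_lt_of_le hpos (csInf_le hbdd hmem)
  have hαρstar : α < ρstar := lt_of_le_of_lt hαρ hρρstar
  -- the α-set is nonempty
  have hne : {c : ℝ | ∃ u : RN N → ℝ, InH1 u ∧ (∫ x, (u x) ^ 2) = α ^ 2 ∧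
      gradL2 u ≤ Rstar ∧ c = Fen V p u}.Nonempty := by
    have hpos := hgeom α hα hαρstar
    have hne' : {c : ℝ | ∃ u : RN N → ℝ, InH1 u ∧ (∫ x, (u x) ^ 2) = α ^ 2 ∧
        gradL2 u = Rstar ∧ c = Fen V p u}.Nonempty := by
      by_contra h
      rw [Set.not_nonempty_iff_eq_empty] at h
      rw [h, Real.sInf_empty] at hpos
      exact lt_irrefl 0 hpos
    obtain ⟨c, u, h1, h2, h3, h4⟩ := hne'
    exact ⟨c, u, h1, h2, le_of_eq h3, h4⟩
  apply le_csInf hne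
  rintro b ⟨u, hu1, hu2, hu3, rfl⟩
  by_cases hF : 0 ≤ Fen V p u
  · exact le_trans hcneg.le hF
  · push_neg at hF
    have hs1 : 1 ≤ ρ / α := (one_le_div hα).mpr hαρ
    have hs0 : 0 < ρ / α := lt_of_lt_of_le one_pos hs1
    by_cases hgr : (ρ / α) * gradL2 u ≤ Rstar
    · -- scale all the way to mass ρ
      have hv1 : InH1 (fun x => (ρ / α) * u x) := InH1_const_mul _ (ne_of_gt hs0) u hu1
      have hv2 : (∫ x, ((ρ / α) * u x) ^ 2) = ρ ^ 2 := by
        rw [mass_const_mul, hu2]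
        field_simp
      have hv3 : gradL2 (fun x => (ρ / α) * u x) ≤ Rstar := by
        rw [gradL2_const_mul _ hs0 u]; exact hgr
      have hmem : Fen V p (fun x => (ρ / α) * u x) ∈ {c : ℝ | ∃ u : RN N → ℝ, InH1 u ∧
          (∫ x, (u x) ^ 2) = ρ ^ 2 ∧ gradL2 u ≤ Rstar ∧ c = Fen V p u} :=
        ⟨_, hv1, hv2, hv3, rfl⟩
      have h5 : Fen V p (fun x => (ρ / α) * u x) ≤ (ρ / α) ^ 2 * Fen V p u :=
        Fen_const_mul_le V p hp2 u _ hs1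
      have hsq : (1:ℝ) ≤ (ρ / α) ^ 2 := by nlinarith
      have h6 : (ρ / α) ^ 2 * Fen V p u ≤ Fen V p u := by nlinarith
      exact le_trans (csInf_le hbddρ hmem) (le_trans h5 h6)
    · exfalso
      push_neg at hgr
      have hnn : 0 ≤ gradL2 u :=
        Real.rpow_nonneg (integral_nonneg fun x => sq_nonneg _) _
      have hg0 : 0 < gradL2 u := by nlinarith
      have ht1 : 1 ≤ Rstar / gradL2 u := (one_le_div hg0).mpr hu3
      have ht0 : 0 < Rstar / gradL2 u := lt_of_lt_of_le one_pos ht1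
      have hts : Rstar / gradL2 u < ρ / α := (div_lt_iff₀ hg0).mpr hgr
      set t := Rstar / gradL2 u with htdef
      have hβ0 : 0 < t * α := mul_pos ht0 hα
      have hβ1 : t * α < ρstar := by
        have h7 : t * α < (ρ / α) * α := by nlinarith
        have h8 : (ρ / α) * α = ρ := by field_simp
        linarith
      have hw1 : InH1 (fun x => t * u x) := InH1_const_mul _ (ne_of_gt ht0) u hu1
      have hw2 : (∫ x, (t * u x) ^ 2) = (t * α) ^ 2 := by
        rw [mass_const_mul, hu2]; ring
      have hw3 : gradL2 (fun x => t * u x) = Rstar := by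
        rw [gradL2_const_mul _ ht0 u, htdef]
        field_simp
      have hpos := hsphere (t * α) hβ0 hβ1 _ hw1 hw2 hw3
      have h5 : Fen V p (fun x => t * u x) ≤ t ^ 2 * Fen V p u :=
        Fen_const_mul_le V p hp2 u t ht1
      nlinarith
end
end
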